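/- For every real a ≥ 0, every integer n ≥ 1, all reals 0 ≤ α ≤ β and every x ≥ 0, the first central moment of the generalized Baskakov–Kantorovich–Stancu operator is T_{n,a}^{α,β}(t−x;x) = −(β/(n+β))·x + (a/(n+β))·x/(1+x) + (2α+1)/(2(n+β)). -/

import Mathlib

open MeasureTheory Filter

/-- Rising factorial `(n)_i = n(n+1)⋯(n+i−1)`, with `(n)_0 = 1`. -/
noncomputable def risingFac (n i : ℕ) : ℝ := ∏ j ∈ Finset.range i, ((n : ℝ) + j)

lemma risingFac_nonneg (n i : ℕ) : 0 ≤ risingFac n i :=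
  Finset.prod_nonneg fun j _ => by positivity

lemma risingFac_succ_left (n i : ℕ) : risingFac n (i + 1) = n * risingFac (n + 1) i := by
  rw [risingFac, Finset.prod_range_succ', risingFac]
  have : ∀ j ∈ Finset.range i, ((n : ℝ) + ((j : ℕ) + 1 : ℕ)) = ((n + 1 : ℕ) : ℝ) + j := by
    intro j _; push_cast; ring
  rw [Finset.prod_congr rfl this]
  push_cast; ring

lemma risingFac_eq_ascFactorial (n i : ℕ) : risingFac n i = (n.ascFactorial i : ℝ) := by
  induction i with
  | zero => simp [risingFac]
  | succ i ih =>
    rw [risingFac, Finset.prod_range_succ, ← risingFac, ih, Nat.ascFactorial_succ]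
    push_cast; ring

lemma risingFac_eq_choose (m i : ℕ) :
    risingFac (m + 1) i = (i.factorial : ℝ) * ((i + m).choose m : ℝ) := by
  rw [risingFac_eq_ascFactorial, Nat.ascFactorial_eq_factorial_mul_choose]
  have h : (m + i).choose i = (i + m).choose m := by
    have := Nat.choose_symm (Nat.le_add_right m i)
    rw [Nat.add_sub_cancel_left] at this
    rw [this, Nat.add_comm]
  rw [h]; push_cast; ring

lemma hasSum_exp_div (y : ℝ) : HasSum (fun j : ℕ => y ^ j / j.factorial) (Real.exp y) := by
  rw [Real.exp_eq_exp_ℝ]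
  exact NormedSpace.expSeries_div_hasSum_exp y

lemma hasSum_risingFac {u : ℝ} (hu : |u| < 1) (m : ℕ) :
    HasSum (fun i : ℕ => risingFac (m + 1) i / i.factorial * u ^ i)
      (1 / (1 - u) ^ (m + 1)) := by
  have h := hasSum_choose_mul_geometric_of_norm_lt_one (𝕜 := ℝ) m (r := u)
    (by rwa [Real.norm_eq_abs])
  have he : (fun i : ℕ => risingFac (m + 1) i / i.factorial * u ^ i)
      = fun i : ℕ => ((i + m).choose m : ℝ) * u ^ i := by
    funext i
    rw [risingFac_eq_choose]
    have : (i.factorial : ℝ) ≠ 0 := Nat.cast_ne_zero.mpr i.factorial_ne_zero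
    field_simp
  rw [he]
  exact h

/-- `p_k(n,a) = Σ_{i=0}^{k} C(k,i)·(n)_i·a^{k−i}`. -/
noncomputable def pCoef (n : ℕ) (a : ℝ) (k : ℕ) : ℝ :=
  ∑ i ∈ Finset.range (k + 1), (Nat.choose k i : ℝ) * risingFac n i * a ^ (k - i)

/-- Generalized Baskakov basis function `W_{n,k}^a(x)`. -/
noncomputable def W (n : ℕ) (a : ℝ) (k : ℕ) (x : ℝ) : ℝ :=
  Real.exp (-(a * x) / (1 + x)) * (pCoef n a k / (Nat.factorial k : ℝ)) * x ^ k /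
    (1 + x) ^ (k + n)

/-- Stancu-type operator `L_{n,a}^{α,β}(f;x) = Σ_k W_{n,k}^a(x) f((k+α)/(n+β))`. -/
noncomputable def Lop (n : ℕ) (a α β : ℝ) (f : ℝ → ℝ) (x : ℝ) : ℝ :=
  ∑' k : ℕ, W n a k x * f (((k : ℝ) + α) / ((n : ℝ) + β))

/-- Generalized Baskakov–Kantorovich–Stancu operator `T_{n,a}^{α,β}(f;x)`. -/
noncomputable def TKS (n : ℕ) (a α β : ℝ) (f : ℝ → ℝ) (x : ℝ) : ℝ :=
  ((n : ℝ) + β) *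
    ∑' k : ℕ, W n a k x *
      ∫ t in (((k : ℝ) + α) / ((n : ℝ) + β))..(((k : ℝ) + α + 1) / ((n : ℝ) + β)), f t


lemma norm_summable_of_nonneg {f : ℕ → ℝ} (h : ∀ i, 0 ≤ f i) (hs : Summable f) :
    Summable fun i => ‖f i‖ :=
  hs.congr fun i => (Real.norm_of_nonneg (h i)).symm

lemma hasSum_congr' {f g : ℕ → ℝ} {S : ℝ} (h : HasSum f S) (he : ∀ i, f i = g i) :
    HasSum g S := (funext he : f = g) ▸ h

lemma hasSum_shift {f : ℕ → ℝ} {S : ℝ} (h0 : f 0 = 0)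
    (h : HasSum (fun i : ℕ => f (i + 1)) S) : HasSum f S := by
  refine (hasSum_nat_add_iff' 1).mp ?_
  simpa [h0] using h

lemma hasSum_W_aux (a : ℝ) (ha : 0 ≤ a) (m : ℕ) (x : ℝ) (hx : 0 ≤ x) :
    HasSum (fun k : ℕ => W (m + 1) a k x) 1 ∧
      HasSum (fun k : ℕ => (k : ℝ) * W (m + 1) a k x)
        (((m : ℝ) + 1) * x + a * (x / (1 + x))) := by
  have hx1 : (0 : ℝ) < 1 + x := by linarith
  set u : ℝ := x / (1 + x) with hu_def
  have hu0 : 0 ≤ u := div_nonneg hx hx1.le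
  have hu1 : u < 1 := by
    rw [hu_def, div_lt_one hx1]; linarith
  have hu : |u| < 1 := abs_lt.mpr ⟨by linarith, hu1⟩
  have h1u : 1 - u = 1 / (1 + x) := by
    rw [hu_def]; field_simp; ring
  have hux : u * (1 + x) = x := by
    rw [hu_def]; field_simp
  set f : ℕ → ℝ := fun i => risingFac (m + 1) i / i.factorial * u ^ i with hf_def
  set g : ℕ → ℝ := fun j => (a * u) ^ j / j.factorial with hg_def
  have hfnn : ∀ i, 0 ≤ f i := fun i =>
    mul_nonneg (div_nonneg (risingFac_nonneg _ _) (by positivity)) (by positivity)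
  have hgnn : ∀ j, 0 ≤ g j := fun j => div_nonneg (by positivity) (by positivity)
  have hpow : ∀ N : ℕ, 1 / (1 - u) ^ N = (1 + x) ^ N := by
    intro N
    rw [h1u, div_pow, one_pow, one_div_one_div]
  have hA : HasSum f ((1 + x) ^ (m + 1)) := by
    rw [← hpow]; exact hasSum_risingFac hu m
  have hB : HasSum g (Real.exp (a * u)) := hasSum_exp_div (a * u)
  have hA' : HasSum (fun i : ℕ => (i : ℝ) * f i) (((m : ℝ) + 1) * u * (1 + x) ^ (m + 2)) := by
    have h := (hasSum_risingFac hu (m + 1)).mul_left (((m : ℝ) + 1) * u)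
    rw [hpow] at h
    refine hasSum_shift (by simp) (hasSum_congr' h fun i => ?_)
    show ((m : ℝ) + 1) * u * (risingFac (m + 1 + 1) i / i.factorial * u ^ i)
        = ((i + 1 : ℕ) : ℝ) * f (i + 1)
    rw [hf_def]
    simp only
    rw [risingFac_succ_left, Nat.factorial_succ, pow_succ]
    have hfac2 : (i.factorial : ℝ) ≠ 0 := Nat.cast_ne_zero.mpr (Nat.factorial_ne_zero _)
    push_cast
    field_simp
  have hB' : HasSum (fun j : ℕ => (j : ℝ) * g j) (a * u * Real.exp (a * u)) := by
    have h := hB.mul_left (a * u)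
    refine hasSum_shift (by simp) (hasSum_congr' h fun j => ?_)
    show a * u * ((a * u) ^ j / j.factorial) = ((j + 1 : ℕ) : ℝ) * g (j + 1)
    rw [hg_def]
    simp only
    rw [Nat.factorial_succ, pow_succ]
    have hfac2 : (j.factorial : ℝ) ≠ 0 := Nat.cast_ne_zero.mpr (Nat.factorial_ne_zero _)
    push_cast
    field_simp
  -- summability of norms
  have hfn := norm_summable_of_nonneg hfnn hA.summable
  have hgn := norm_summable_of_nonneg hgnn hB.summable
  have hfn' := norm_summable_of_nonneg (fun i => mul_nonneg (Nat.cast_nonneg i) (hfnn i))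
    hA'.summable
  have hgn' := norm_summable_of_nonneg (fun j => mul_nonneg (Nat.cast_nonneg j) (hgnn j))
    hB'.summable
  -- Cauchy products
  have hP : HasSum (fun k : ℕ => ∑ i ∈ Finset.range (k + 1), f i * g (k - i))
      ((1 + x) ^ (m + 1) * Real.exp (a * u)) := by
    have := hasSum_sum_range_mul_of_summable_norm hfn hgn
    rwa [hA.tsum_eq, hB.tsum_eq] at this
  have hP1 : HasSum (fun k : ℕ => ∑ i ∈ Finset.range (k + 1), ((i : ℝ) * f i) * g (k - i))
      (((m : ℝ) + 1) * u * (1 + x) ^ (m + 2) * Real.exp (a * u)) := by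
    have := hasSum_sum_range_mul_of_summable_norm hfn' hgn
    rwa [hA'.tsum_eq, hB.tsum_eq] at this
  have hP2 : HasSum (fun k : ℕ => ∑ i ∈ Finset.range (k + 1), f i * (((k - i : ℕ) : ℝ) * g (k - i)))
      ((1 + x) ^ (m + 1) * (a * u * Real.exp (a * u))) := by
    have := hasSum_sum_range_mul_of_summable_norm hfn hgn'
    rwa [hA.tsum_eq, hB'.tsum_eq] at this
  -- key term identity
  have hterm : ∀ k : ℕ, ∑ i ∈ Finset.range (k + 1), f i * g (k - i)
      = pCoef (m + 1) a k / k.factorial * u ^ k := by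
    intro k
    rw [pCoef, Finset.sum_div, Finset.sum_mul]
    refine Finset.sum_congr rfl fun i hi => ?_
    have hik : i ≤ k := Nat.lt_succ_iff.mp (Finset.mem_range.mp hi)
    have hfact : ((k.choose i : ℕ) : ℝ) * i.factorial * (k - i).factorial = k.factorial := by
      exact_mod_cast Nat.choose_mul_factorial_mul_factorial hik
    have hupow : u ^ i * u ^ (k - i) = u ^ k := by
      rw [← pow_add, Nat.add_sub_cancel' hik]
    rw [hf_def, hg_def]
    simp only
    rw [mul_pow]
    have h1 : (i.factorial : ℝ) ≠ 0 := Nat.cast_ne_zero.mpr (Nat.factorial_ne_zero _)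
    have h2 : ((k - i).factorial : ℝ) ≠ 0 := Nat.cast_ne_zero.mpr (Nat.factorial_ne_zero _)
    have h3 : (k.factorial : ℝ) ≠ 0 := Nat.cast_ne_zero.mpr (Nat.factorial_ne_zero _)
    field_simp
    rw [← hupow]
    linear_combination (-(risingFac (m + 1) i * a ^ (k - i) * u ^ i * u ^ (k - i))) * hfact
  -- weighted term identity
  have hterm' : ∀ k : ℕ,
      (∑ i ∈ Finset.range (k + 1), ((i : ℝ) * f i) * g (k - i))
        + ∑ i ∈ Finset.range (k + 1), f i * (((k - i : ℕ) : ℝ) * g (k - i))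
      = (k : ℝ) * (pCoef (m + 1) a k / k.factorial * u ^ k) := by
    intro k
    rw [← hterm k, Finset.mul_sum, ← Finset.sum_add_distrib]
    refine Finset.sum_congr rfl fun i hi => ?_
    have hik : i ≤ k := Nat.lt_succ_iff.mp (Finset.mem_range.mp hi)
    have : ((i : ℝ) + ((k - i : ℕ) : ℝ)) = (k : ℝ) := by
      rw [← Nat.cast_add, Nat.add_sub_cancel' hik]
    linear_combination (f i * g (k - i)) * this
  -- W in terms of f, g
  have hW : ∀ k : ℕ, W (m + 1) a k x
      = Real.exp (-(a * u)) / (1 + x) ^ (m + 1) * (pCoef (m + 1) a k / k.factorial * u ^ k) := by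
    intro k
    rw [W]
    have hxe : -(a * x) / (1 + x) = -(a * u) := by
      rw [hu_def]; field_simp
    have hxp : x ^ k = u ^ k * (1 + x) ^ k := by
      rw [hu_def, div_pow]
      field_simp
    rw [hxe, hxp, pow_add]
    have h4 : ((1 : ℝ) + x) ^ k ≠ 0 := by positivity
    have h5 : ((1 : ℝ) + x) ^ (m + 1) ≠ 0 := by positivity
    field_simp
  have hne : ((1 : ℝ) + x) ^ (m + 1) ≠ 0 := by positivity
  have he : Real.exp (a * u) ≠ 0 := Real.exp_ne_zero _
  constructor
  · have h := (hasSum_congr' hP hterm).mul_left (Real.exp (-(a * u)) / (1 + x) ^ (m + 1))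
    have h1 : Real.exp (-(a * u)) / (1 + x) ^ (m + 1)
        * ((1 + x) ^ (m + 1) * Real.exp (a * u)) = 1 := by
      rw [Real.exp_neg]; field_simp
    exact h1 ▸ hasSum_congr' h fun k => (hW k).symm
  · have h := (hasSum_congr' (hP1.add hP2) hterm').mul_left
      (Real.exp (-(a * u)) / (1 + x) ^ (m + 1))
    have h1 : Real.exp (-(a * u)) / (1 + x) ^ (m + 1)
        * (((m : ℝ) + 1) * u * (1 + x) ^ (m + 2) * Real.exp (a * u)
          + (1 + x) ^ (m + 1) * (a * u * Real.exp (a * u)))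
        = ((m : ℝ) + 1) * x + a * u := by
      rw [Real.exp_neg, pow_succ]
      field_simp
      linear_combination ((m : ℝ) + 1) * (1 + x) ^ m * (1 + x) * hux
    refine h1 ▸ hasSum_congr' h fun k => ?_
    rw [hW k]; ring

theorem Top_first_central_moment (a : ℝ) (ha : 0 ≤ a) (n : ℕ) (hn : 1 ≤ n) (α β : ℝ)
    (hα : 0 ≤ α) (hαβ : α ≤ β) (x : ℝ) (hx : 0 ≤ x) :
    TKS n a α β (fun t => t - x) x =
      -(β / ((n : ℝ) + β)) * x + (a / ((n : ℝ) + β)) * (x / (1 + x)) +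
        (2 * α + 1) / (2 * ((n : ℝ) + β)) := by
  obtain ⟨m, rfl⟩ : ∃ m, n = m + 1 := ⟨n - 1, (Nat.succ_pred_eq_of_pos hn).symm⟩
  obtain ⟨hS0, hS1⟩ := hasSum_W_aux a ha m x hx
  have hx1 : (0 : ℝ) < 1 + x := by linarith
  set N : ℝ := ((m + 1 : ℕ) : ℝ) + β with hN_def
  have hN : 0 < N := by
    rw [hN_def]; push_cast; linarith
  have hI : ∀ k : ℕ, (∫ t in (((k : ℝ) + α) / N)..(((k : ℝ) + α + 1) / N), (t - x))
      = ((k : ℝ) + α + 1 / 2 - N * x) / N ^ 2 := by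
    intro k
    rw [intervalIntegral.integral_sub
      (Continuous.intervalIntegrable (by exact continuous_id : Continuous fun t : ℝ => t) _ _)
      (Continuous.intervalIntegrable continuous_const _ _),
      integral_id, intervalIntegral.integral_const, smul_eq_mul]
    field_simp
    ring
  have hS : HasSum (fun k : ℕ => W (m + 1) a k x * (((k : ℝ) + α + 1 / 2 - N * x) / N ^ 2))
      (1 / N ^ 2 * (((m : ℝ) + 1) * x + a * (x / (1 + x)))
        + (α + 1 / 2 - N * x) / N ^ 2 * 1) := by
    have h := (hS1.mul_left (1 / N ^ 2)).add (hS0.mul_left ((α + 1 / 2 - N * x) / N ^ 2))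
    refine hasSum_congr' h fun k => ?_
    ring
  simp only [TKS]
  rw [← hN_def]
  have ht : (∑' k : ℕ, W (m + 1) a k x *
      ∫ t in (((k : ℝ) + α) / N)..(((k : ℝ) + α + 1) / N), (t - x))
      = 1 / N ^ 2 * (((m : ℝ) + 1) * x + a * (x / (1 + x)))
        + (α + 1 / 2 - N * x) / N ^ 2 * 1 := by
    rw [← hS.tsum_eq]
    exact tsum_congr fun k => by rw [hI k]
  rw [ht]
  have hmN : ((m : ℝ) + 1) = N - β := by rw [hN_def]; push_cast; ring
  rw [hmN]
  field_simp
  ring
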